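/- Let G be a finitely generated nilpotent group and V a subgroup. Then there exist at most finitely many subgroups of G of the form ⟨V, c⟩ (the subgroup generated by V together with a single element c ∈ G) that are finite index extensions of V. -/

import Mathlib

open Subgroup Pointwise commutatorElement

section Aux

variable {G : Type*} [Group G]

/-- If `V ≤ H` with finite relative index, every element of `H` has a positive power in `V`. -/
private lemma exists_pow_mem_aux {V H : Subgroup G}
    (hfi : (V.subgroupOf H).FiniteIndex) {h : G} (hh : h ∈ H) :
    ∃ n : ℕ, 0 < n ∧ h ^ n ∈ V := by
  haveI := hfi
  haveI : Finite (H ⧸ V.subgroupOf H) := Subgroup.finite_quotient_of_finiteIndex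
  obtain ⟨a, b, hne, heq⟩ := Finite.exists_ne_map_eq_of_infinite
    (fun k : ℕ => (QuotientGroup.mk ((⟨h, hh⟩ : H) ^ k) : H ⧸ V.subgroupOf H))
  wlog hab : a < b generalizing a b
  · exact this b a hne.symm heq.symm (by omega)
  refine ⟨b - a, by omega, ?_⟩
  have h2 : ((⟨h, hh⟩ : H) ^ a)⁻¹ * (⟨h, hh⟩ : H) ^ b ∈ V.subgroupOf H := by
    rwa [QuotientGroup.eq] at heq
  have h3 : ((⟨h, hh⟩ : H) ^ a)⁻¹ * (⟨h, hh⟩ : H) ^ b = (⟨h, hh⟩ : H) ^ (b - a) := by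
    rw [show b = a + (b - a) by omega, pow_add, inv_mul_cancel_left]
    congr 1
    omega
  rw [h3, Subgroup.mem_subgroupOf] at h2
  simpa using h2

/-- A subgroup of a f.g. commutative group is finitely generated. -/
private lemma subgroup_fg_of_comm {A : Type*} [CommGroup A] [Group.FG A] (L : Subgroup A) :
    L.FG := by
  rw [Subgroup.fg_iff_add_fg]
  haveI : Module.Finite ℤ (Additive A) := Module.Finite.iff_addGroup_fg.mpr inferInstance
  haveI : IsNoetherian ℤ (Additive A) := isNoetherian_of_isNoetherianRing_of_finite ℤ (Additive A)
  have h := IsNoetherian.noetherian (AddSubgroup.toIntSubmodule L.toAddSubgroup)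
  rw [Submodule.fg_iff_addSubgroup_fg, AddSubgroup.toIntSubmodule_toAddSubgroup] at h
  exact h

/-- A commutative group structure on a subgroup contained in the center. -/
@[reducible]
private def commGroupOfLeCenter {C : Subgroup G} (hC : C ≤ Subgroup.center G) :
    CommGroup C :=
  { (inferInstance : Group C) with
    mul_comm := fun a b => Subtype.ext ((Subgroup.mem_center_iff.mp (hC b.2) a.1)) }

/-- A subgroup of a f.g. central subgroup is f.g. -/
private lemma fg_of_le_central {C L : Subgroup G} (hC : C ≤ Subgroup.center G)
    (hCfg : C.FG) (hLC : L ≤ C) : L.FG := by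
  haveI : Group.FG C := (Group.fg_iff_subgroup_fg C).mpr hCfg
  letI : CommGroup C := commGroupOfLeCenter hC
  obtain ⟨S, hS⟩ := subgroup_fg_of_comm (L.subgroupOf C)
  rw [Subgroup.fg_iff]
  refine ⟨C.subtype '' (S : Set C), ?_, (S.finite_toSet.image _)⟩
  rw [← MonoidHom.map_closure, hS, Subgroup.subgroupOf_map_subtype, inf_eq_left.mpr hLC]

/-- Finite relative index is preserved by pushing forward along a homomorphism. -/
private lemma finiteIndex_map {G' : Type*} [Group G'] (f : G →* G')
    {V H : Subgroup G} (hfi : (V.subgroupOf H).FiniteIndex) :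
    ((V.map f).subgroupOf (H.map f)).FiniteIndex := by
  have h1 : ((V.subgroupOf H).map (f.subgroupMap H)).index ∣ (V.subgroupOf H).index :=
    Subgroup.index_map_dvd _ (f.subgroupMap_surjective H)
  have h2 : (V.subgroupOf H).map (f.subgroupMap H) ≤ (V.map f).subgroupOf (H.map f) := by
    rintro x ⟨⟨v, hvH⟩, hv, rfl⟩
    rw [SetLike.mem_coe, Subgroup.mem_subgroupOf] at hv
    rw [Subgroup.mem_subgroupOf]
    exact ⟨v, hv, rfl⟩
  exact ⟨ne_zero_of_dvd_ne_zero (ne_zero_of_dvd_ne_zero hfi.index_ne_zero h1)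
    (Subgroup.index_dvd_of_le h2)⟩

/-- There are finitely many subgroups between `V` and `W` if `V` has finite index in `W`. -/
private lemma finite_intermediate (V W : Subgroup G)
    (hfi : (V.subgroupOf W).FiniteIndex) :
    {H : Subgroup G | V ≤ H ∧ H ≤ W}.Finite := by
  haveI := hfi
  haveI : Finite (W ⧸ V.subgroupOf W) := Subgroup.finite_quotient_of_finiteIndex
  have key : ∀ H1 H2 : Subgroup G, V ≤ H2 → H1 ≤ W →
      ((QuotientGroup.mk '' ((H1.subgroupOf W : Subgroup W) : Set W) : Set (W ⧸ V.subgroupOf W)) ⊆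
       (QuotientGroup.mk '' ((H2.subgroupOf W : Subgroup W) : Set W))) → H1 ≤ H2 := by
    intro H1 H2 hV2 h1W hsub g hg
    have hgW : g ∈ W := h1W hg
    have : (QuotientGroup.mk (⟨g, hgW⟩ : W) : W ⧸ V.subgroupOf W) ∈
        (QuotientGroup.mk '' ((H2.subgroupOf W : Subgroup W) : Set W)) := by
      apply hsub
      exact ⟨⟨g, hgW⟩, by rwa [SetLike.mem_coe, Subgroup.mem_subgroupOf], rfl⟩
    obtain ⟨w, hw, hweq⟩ := this
    rw [QuotientGroup.eq] at hweq
    rw [Subgroup.mem_subgroupOf] at hweq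
    rw [SetLike.mem_coe, Subgroup.mem_subgroupOf] at hw
    have : (w : G)⁻¹ * g ∈ H2 := hV2 hweq
    simpa using mul_mem hw this
  apply Set.Finite.of_finite_image (f := fun H : Subgroup G =>
    (QuotientGroup.mk '' ((H.subgroupOf W : Subgroup W) : Set W) : Set (W ⧸ V.subgroupOf W)))
  · exact Set.toFinite _
  · rintro H1 ⟨hV1, h1W⟩ H2 ⟨hV2, h2W⟩ heq
    exact le_antisymm (key H1 H2 hV2 h1W heq.le) (key H2 H1 hV1 h2W heq.ge)

/-- Lower central series of a quotient/image under surjection. -/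
private lemma lcs_le_map {G' : Type*} [Group G'] {f : G →* G'} (hf : Function.Surjective f)
    (n : ℕ) : (⊤ : Subgroup G').lowerCentralSeries n ≤ ((⊤ : Subgroup G).lowerCentralSeries n).map f := by
  induction n with
  | zero =>
    intro x _
    obtain ⟨y, rfl⟩ := hf x
    exact Subgroup.mem_map_of_mem f (by simp)
  | succ n ih =>
    show ⁅(⊤ : Subgroup G').lowerCentralSeries n, (⊤ : Subgroup G')⁆ ≤
      Subgroup.map f ⁅(⊤ : Subgroup G).lowerCentralSeries n, (⊤ : Subgroup G)⁆
    rw [Subgroup.map_commutator]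
    apply Subgroup.commutator_mono ih
    intro x _
    obtain ⟨y, rfl⟩ := hf x
    exact Subgroup.mem_map_of_mem f (by simp)

/-- Each term of the lower central series of a f.g. group is finitely generated
modulo the next term. -/
private lemma lcs_fg_mod_succ [Group.FG G] (i : ℕ) :
    ∃ T : Set G, T.Finite ∧ T ⊆ (⊤ : Subgroup G).lowerCentralSeries i ∧
      (⊤ : Subgroup G).lowerCentralSeries i = Subgroup.closure T ⊔ (⊤ : Subgroup G).lowerCentralSeries (i + 1) := by
  obtain ⟨X, hXtop, hXfin⟩ := Group.fg_iff.mp ‹_›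
  induction i with
  | zero =>
    refine ⟨X, hXfin, by simp, ?_⟩
    rw [Subgroup.lowerCentralSeries_zero, eq_comm, ← top_le_iff, ← hXtop]
    exact le_sup_left
  | succ i ih =>
    obtain ⟨T, hTfin, hTsub, hTeq⟩ := ih
    set M : Subgroup G := Subgroup.closure ((fun p : G × G => ⁅p.1, p.2⁆) '' (T ×ˢ X)) ⊔
      (⊤ : Subgroup G).lowerCentralSeries (i + 2) with hM
    have hγ2M : (⊤ : Subgroup G).lowerCentralSeries (i + 2) ≤ M := le_sup_right
    have hTM : Subgroup.closure ((fun p : G × G => ⁅p.1, p.2⁆) '' (T ×ˢ X)) ≤ M := le_sup_left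
    have hcorr : ∀ u ∈ (⊤ : Subgroup G).lowerCentralSeries (i + 1), ∀ g : G,
        ⁅u, g⁆ ∈ (⊤ : Subgroup G).lowerCentralSeries (i + 2) := by
      intro u hu g
      show ⁅u, g⁆ ∈ ⁅(⊤ : Subgroup G).lowerCentralSeries (i + 1), (⊤ : Subgroup G)⁆
      exact Subgroup.commutator_mem_commutator hu (Subgroup.mem_top g)
    -- inner: if `t ∈ γᵢ` and commutators with generators lie in `M`, then all do
    have inner : ∀ t, t ∈ (⊤ : Subgroup G).lowerCentralSeries i → (∀ x ∈ X, ⁅t, x⁆ ∈ M) →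
        ∀ g : G, ⁅t, g⁆ ∈ M := by
      intro t ht hX g
      have htsucc : ∀ g : G, ⁅t, g⁆ ∈ (⊤ : Subgroup G).lowerCentralSeries (i + 1) := by
        intro g
        show ⁅t, g⁆ ∈ ⁅(⊤ : Subgroup G).lowerCentralSeries i, (⊤ : Subgroup G)⁆
        exact Subgroup.commutator_mem_commutator ht (Subgroup.mem_top g)
      have hg : g ∈ Subgroup.closure X := by rw [hXtop]; trivial
      induction hg using Subgroup.closure_induction with
      | mem x hx => exact hX x hx
      | one => simpa using one_mem M
      | mul g h _ _ pg ph =>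
        have hid : ⁅t, g * h⁆ = ⁅t, g⁆ * ⁅t, h⁆ * ⁅⁅t, h⁆⁻¹, g⁆ := by
          simp only [commutatorElement_def]
          group
        rw [hid]
        exact mul_mem (mul_mem pg ph) (hγ2M (hcorr _ (inv_mem (htsucc h)) g))
      | inv g _ pg =>
        have hid : ⁅t, g⁻¹⁆ = ⁅t, g⁆⁻¹ * ⁅⁅t, g⁻¹⁆⁻¹, g⁆⁻¹ := by
          simp only [commutatorElement_def]
          group
        rw [hid]
        exact mul_mem (inv_mem pg) (inv_mem (hγ2M (hcorr _ (inv_mem (htsucc g⁻¹)) g)))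
    have key : ∀ a ∈ (⊤ : Subgroup G).lowerCentralSeries i, ∀ g : G, ⁅a, g⁆ ∈ M := by
      intro a ha
      have ha' : a ∈ Subgroup.closure (T ∪ ((⊤ : Subgroup G).lowerCentralSeries (i + 1) : Set G)) := by
        rw [Subgroup.closure_union, Subgroup.closure_eq]
        exact hTeq ▸ ha
      have main : a ∈ (⊤ : Subgroup G).lowerCentralSeries i ∧ ∀ g : G, ⁅a, g⁆ ∈ M := by
        clear ha
        induction ha' using Subgroup.closure_induction with
        | mem x hx =>
          rcases hx with hx | hx
          · refine ⟨hTsub hx, inner x (hTsub hx) ?_⟩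
            intro x' hx'
            exact hTM (Subgroup.subset_closure
              (Set.mem_image_of_mem _ (Set.mk_mem_prod hx hx')))
          · refine ⟨Subgroup.lowerCentralSeries_antitone _ (Nat.le_succ i) hx, fun g => hγ2M (hcorr x hx g)⟩
        | one => exact ⟨one_mem _, fun g => by simpa using one_mem M⟩
        | mul a b _ _ pa pb =>
          refine ⟨mul_mem pa.1 pb.1, fun g => ?_⟩
          have hid : ⁅a * b, g⁆ = ⁅b, g⁆ * ⁅⁅b, g⁆⁻¹, a⁆ * ⁅a, g⁆ := by
            simp only [commutatorElement_def]
            group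
          rw [hid]
          have hbsucc : ⁅b, g⁆ ∈ (⊤ : Subgroup G).lowerCentralSeries (i + 1) :=
            Subgroup.commutator_mem_commutator pb.1 (Subgroup.mem_top g)
          exact mul_mem (mul_mem (pb.2 g) (hγ2M (hcorr _ (inv_mem hbsucc) a))) (pa.2 g)
        | inv a _ pa =>
          refine ⟨inv_mem pa.1, fun g => ?_⟩
          have hid : ⁅a⁻¹, g⁆ = ⁅a, g⁆⁻¹ * ⁅⁅a, g⁆, a⁻¹⁆ := by
            simp only [commutatorElement_def]
            group
          rw [hid]
          have hasucc : ⁅a, g⁆ ∈ (⊤ : Subgroup G).lowerCentralSeries (i + 1) :=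
            Subgroup.commutator_mem_commutator pa.1 (Subgroup.mem_top g)
          exact mul_mem (inv_mem (pa.2 g)) (hγ2M (hcorr _ hasucc a⁻¹))
      exact main.2
    refine ⟨(fun p : G × G => ⁅p.1, p.2⁆) '' (T ×ˢ X), (hTfin.prod hXfin).image _, ?_, ?_⟩
    · rintro y ⟨⟨t, x⟩, ⟨htT, -⟩, rfl⟩
      show ⁅t, x⁆ ∈ ⁅(⊤ : Subgroup G).lowerCentralSeries i, (⊤ : Subgroup G)⁆
      exact Subgroup.commutator_mem_commutator (hTsub htT) (Subgroup.mem_top x)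
    · refine le_antisymm ?_ ?_
      · show ⁅(⊤ : Subgroup G).lowerCentralSeries i, (⊤ : Subgroup G)⁆ ≤ M
        rw [Subgroup.commutator_le]
        intro g₁ h₁ g₂ _
        exact key g₁ h₁ g₂
      · apply sup_le
        · apply Subgroup.closure_le _ |>.mpr
          rintro y ⟨⟨t, x⟩, ⟨htT, -⟩, rfl⟩
          show ⁅t, x⁆ ∈ ⁅(⊤ : Subgroup G).lowerCentralSeries i, (⊤ : Subgroup G)⁆
          exact Subgroup.commutator_mem_commutator (hTsub htT) (Subgroup.mem_top x)
        · exact Subgroup.lowerCentralSeries_antitone _ (Nat.le_succ (i + 1))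

end Aux

/-- The main inductive statement: induction on an upper bound of the nilpotency class. -/
private theorem stmt_7_aux : ∀ (n : ℕ) (G : Type u) [Group G] [Group.FG G]
    [Group.IsNilpotent G], Group.nilpotencyClass G ≤ n → ∀ V : Subgroup G,
    {H : Subgroup G | (∃ c : G, H = V ⊔ Subgroup.closure {c}) ∧
      (V.subgroupOf H).FiniteIndex}.Finite := by
  intro n
  induction n with
  | zero =>
    intro G _ _ _ hclass V
    haveI : Subsingleton G :=
      nilpotencyClass_zero_iff_subsingleton.mp (le_antisymm hclass (Nat.zero_le _))
    haveI : Subsingleton (Subgroup G) := by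
      constructor
      intro H K
      ext x
      simp [Subsingleton.elim x 1, one_mem]
    exact Set.Subsingleton.finite (fun H _ K _ => Subsingleton.elim H K)
  | succ n IH =>
    intro G _ _ _ hclass V
    set C := (⊤ : Subgroup G).lowerCentralSeries n with hCdef
    have hCbot : (⊤ : Subgroup G).lowerCentralSeries (n + 1) = ⊥ :=
      Subgroup.lowerCentralSeries_eq_bot_iff_nilpotencyClass_le.mpr hclass
    have hC : C ≤ Subgroup.center G := by
      intro z hz
      rw [Subgroup.mem_center_iff]
      intro g
      have : ⁅z, g⁆ ∈ (⊤ : Subgroup G).lowerCentralSeries (n + 1) :=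
        Subgroup.commutator_mem_commutator hz (Subgroup.mem_top g)
      rw [hCbot, Subgroup.mem_bot, commutatorElement_eq_one_iff_mul_comm] at this
      exact this.symm
    have hCfg : C.FG := by
      obtain ⟨T, hTfin, hTsub, hTeq⟩ := lcs_fg_mod_succ (G := G) n
      rw [Subgroup.fg_iff]
      exact ⟨T, by rw [hCdef, hTeq, hCbot, sup_bot_eq], hTfin⟩
    let π : G →* G ⧸ C := QuotientGroup.mk' C
    have hπ : Function.Surjective π := QuotientGroup.mk'_surjective C
    haveI : Group.IsNilpotent (G ⧸ C) := inferInstance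
    have hclassQ : Group.nilpotencyClass (G ⧸ C) ≤ n := by
      rw [← Subgroup.lowerCentralSeries_eq_bot_iff_nilpotencyClass_le]
      have h1 := lcs_le_map hπ n
      have h2 : Subgroup.map π C = ⊥ := by
        rw [Subgroup.map_eq_bot_iff, QuotientGroup.ker_mk']
      rw [← le_bot_iff, ← h2]
      exact h1
    have hSbar := IH (G ⧸ C) hclassQ (V.map π)
    -- fibers
    have fiberFinite : ∀ K : Subgroup (G ⧸ C),
        {H : Subgroup G | ((∃ c : G, H = V ⊔ Subgroup.closure {c}) ∧
          (V.subgroupOf H).FiniteIndex) ∧ H.map π = K}.Finite := by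
      intro K
      by_cases hne : {H : Subgroup G | ((∃ c : G, H = V ⊔ Subgroup.closure {c}) ∧
          (V.subgroupOf H).FiniteIndex) ∧ H.map π = K}.Nonempty
      swap
      · rw [Set.not_nonempty_iff_eq_empty] at hne
        rw [hne]; exact Set.finite_empty
      obtain ⟨H₀, ⟨⟨c₀, hc₀⟩, hfi₀⟩, hmap₀⟩ := hne
      have hVH₀ : V ≤ H₀ := hc₀ ▸ le_sup_left
      -- the subgroup of central elements with a power in V
      set Ct : Subgroup G :=
        { carrier := {z : G | z ∈ C ∧ ∃ m : ℕ, 0 < m ∧ z ^ m ∈ V}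
          one_mem' := ⟨one_mem C, 1, one_pos, by simpa using one_mem V⟩
          mul_mem' := by
            rintro a b ⟨haC, m, hm, ham⟩ ⟨hbC, k, hk, hbk⟩
            refine ⟨mul_mem haC hbC, m * k, Nat.mul_pos hm hk, ?_⟩
            have hab : Commute a b := ((Subgroup.mem_center_iff.mp (hC haC)) b).symm
            rw [hab.mul_pow]
            exact mul_mem (by rw [pow_mul]; exact pow_mem ham k)
              (by rw [show m * k = k * m by ring, pow_mul]; exact pow_mem hbk m)
          inv_mem' := by
            rintro a ⟨haC, m, hm, ham⟩
            exact ⟨inv_mem haC, m, hm, by rw [inv_pow]; exact inv_mem ham⟩ } with hCt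
      have hCtC : Ct ≤ C := fun z hz => hz.1
      have hCtcenter : Ct ≤ Subgroup.center G := hCtC.trans hC
      haveI hCtnormal : Ct.Normal := by
        constructor
        intro z hz g
        have : g * z = z * g := Subgroup.mem_center_iff.mp (hCtcenter hz) g
        rw [show g * z * g⁻¹ = z by rw [this]; group]
        exact hz
      set W : Subgroup G := H₀ ⊔ Ct with hW
      have hVW : V ≤ W := hVH₀.trans le_sup_left
      -- finite index of V in W
      have hWnorm : W ≤ Subgroup.normalizer (H₀ : Set G) := by
        apply sup_le Subgroup.le_normalizer
        intro z hz
        rw [Subgroup.mem_normalizer_iff]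
        intro h
        have : z * h = h * z := (Subgroup.mem_center_iff.mp (hCtcenter hz) h).symm
        rw [show z * h * z⁻¹ = h by rw [this]; group]
      haveI hH₀W : (H₀.subgroupOf W).Normal := by
        constructor
        rintro ⟨x, hxW⟩ hx ⟨w, hwW⟩
        rw [Subgroup.mem_subgroupOf] at hx ⊢
        exact (Subgroup.mem_normalizer_iff.mp (hWnorm hwW) x).mp hx
      have hfiW : (V.subgroupOf W).FiniteIndex := by
        have hfiH₀W : (H₀.subgroupOf W).FiniteIndex := by
          letI : CommGroup Ct := commGroupOfLeCenter hCtcenter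
          haveI : Group.FG Ct := (Group.fg_iff_subgroup_fg Ct).mpr (fg_of_le_central hC hCfg hCtC)
          set φ : Ct →* W ⧸ H₀.subgroupOf W :=
            (QuotientGroup.mk' (H₀.subgroupOf W)).comp (Subgroup.inclusion le_sup_right) with hφ
          have hφsurj : Function.Surjective φ := by
            intro q
            induction q using QuotientGroup.induction_on with
            | H w =>
              have hw : (w : G) ∈ (H₀ : Set G) * (Ct : Set G) := by
                rw [← Subgroup.mul_normal H₀ Ct]
                exact w.2
              obtain ⟨h, hh, z, hz, hhz⟩ := hw
              have hhz' : h * z = (w : G) := hhz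
              refine ⟨⟨z, hz⟩, ?_⟩
              show QuotientGroup.mk _ = QuotientGroup.mk w
              rw [QuotientGroup.eq, Subgroup.mem_subgroupOf]
              simp only [Subgroup.coe_mul, Subgroup.coe_inv, Subgroup.coe_inclusion]
              show z⁻¹ * (w : G) ∈ H₀
              rw [← hhz']
              have hcomm : h * z = z * h := Subgroup.mem_center_iff.mp (hCtcenter hz) h
              have h2 : z⁻¹ * (h * z) = h := by rw [hcomm]; group
              rw [h2]
              exact hh
          letI : CommGroup (W ⧸ H₀.subgroupOf W) :=
            { (inferInstance : Group (W ⧸ H₀.subgroupOf W)) with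
              mul_comm := by
                intro q1 q2
                obtain ⟨z1, rfl⟩ := hφsurj q1
                obtain ⟨z2, rfl⟩ := hφsurj q2
                rw [← map_mul, ← map_mul, mul_comm] }
          haveI : Group.FG (W ⧸ H₀.subgroupOf W) := Group.fg_of_surjective hφsurj
          have htor : Monoid.IsTorsion (W ⧸ H₀.subgroupOf W) := by
            intro q
            obtain ⟨z, rfl⟩ := hφsurj q
            obtain ⟨hzC, m, hm, hzm⟩ := z.2
            rw [isOfFinOrder_iff_pow_eq_one]
            refine ⟨m, hm, ?_⟩
            rw [← map_pow]
            show QuotientGroup.mk _ = 1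
            rw [QuotientGroup.eq_one_iff]
            rw [Subgroup.mem_subgroupOf]
            show (((Subgroup.inclusion (le_sup_right : Ct ≤ W)) (z ^ m)) : G) ∈ H₀
            have : (((Subgroup.inclusion (le_sup_right : Ct ≤ W)) (z ^ m)) : G) = (z : G) ^ m := by
              simp [Subgroup.coe_inclusion]
            rw [this]
            exact hVH₀ hzm
          haveI : Finite (W ⧸ H₀.subgroupOf W) := CommGroup.finite_of_fg_torsion _ htor
          exact Subgroup.finiteIndex_of_finite_quotient
        constructor
        have hmul := Subgroup.relIndex_mul_relIndex V H₀ W hVH₀ le_sup_left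
        show V.relIndex W ≠ 0
        rw [← hmul]
        exact Nat.mul_ne_zero hfi₀.index_ne_zero hfiH₀W.index_ne_zero
      -- every member of the fiber is between V and W
      have hfibsub : {H : Subgroup G | ((∃ c : G, H = V ⊔ Subgroup.closure {c}) ∧
          (V.subgroupOf H).FiniteIndex) ∧ H.map π = K} ⊆ {H : Subgroup G | V ≤ H ∧ H ≤ W} := by
        rintro H ⟨⟨⟨d, hd⟩, hfiH⟩, hmapH⟩
        have hVH : V ≤ H := hd ▸ le_sup_left
        have hdH : d ∈ H := hd ▸ SetLike.le_def.mp le_sup_right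
          (Subgroup.mem_closure_singleton_self d)
        have hπd : π d ∈ Subgroup.map π H₀ := by
          rw [hmap₀, ← hmapH]
          exact Subgroup.mem_map_of_mem π hdH
        obtain ⟨h, hh, hπh⟩ := hπd
        have hzC : h⁻¹ * d ∈ C := by
          have : π (h⁻¹ * d) = 1 := by
            rw [map_mul, map_inv, hπh]
            group
          rwa [← QuotientGroup.ker_mk' C, MonoidHom.mem_ker]
        set z := h⁻¹ * d with hzdef
        have hdz : d = h * z := by rw [hzdef]; group
        obtain ⟨k, hk, hdk⟩ := exists_pow_mem_aux hfiH hdH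
        have hcomm : Commute h z := (Subgroup.mem_center_iff.mp (hC hzC) h)
        have hzk : z ^ k ∈ H₀ := by
          have : d ^ k = h ^ k * z ^ k := by rw [hdz, hcomm.mul_pow]
          have h2 : z ^ k = (h ^ k)⁻¹ * d ^ k := by rw [this]; group
          rw [h2]
          exact mul_mem (inv_mem (pow_mem hh k)) (hVH₀ hdk)
        obtain ⟨j, hj, hzkj⟩ := exists_pow_mem_aux hfi₀ hzk
        have hzCt : z ∈ Ct := ⟨hzC, k * j, Nat.mul_pos hk hj, by rw [pow_mul]; exact hzkj⟩
        have hdW : d ∈ W := by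
          rw [hdz]
          exact mul_mem (SetLike.le_def.mp (le_sup_left : H₀ ≤ W) hh)
            (SetLike.le_def.mp (le_sup_right : Ct ≤ W) hzCt)
        refine ⟨hVH, ?_⟩
        rw [hd]
        apply sup_le hVW
        rw [Subgroup.closure_le]
        simpa using hdW
      exact Set.Finite.subset (finite_intermediate V W hfiW) hfibsub
    -- assemble
    apply Set.Finite.subset (Set.Finite.biUnion hSbar (fun K _ => fiberFinite K))
    intro H hH
    have hΦ : H.map π ∈ {H : Subgroup (G ⧸ C) |
        (∃ c : G ⧸ C, H = (V.map π) ⊔ Subgroup.closure {c}) ∧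
        (((V.map π)).subgroupOf H).FiniteIndex} := by
      obtain ⟨⟨c, hc⟩, hfi⟩ := hH
      constructor
      · refine ⟨π c, ?_⟩
        rw [hc, Subgroup.map_sup, MonoidHom.map_closure, Set.image_singleton]
      · exact finiteIndex_map π hfi
    exact Set.mem_biUnion hΦ ⟨hH, rfl⟩

/-- In a finitely generated nilpotent group, a subgroup `V` has only finitely
many finite index extensions of the form `⟨V, c⟩`. -/
theorem stmt_7 {G : Type*} [Group G] [Group.FG G] [Group.IsNilpotent G]
    (V : Subgroup G) :
    {H : Subgroup G | (∃ c : G, H = V ⊔ Subgroup.closure {c}) ∧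
      (V.subgroupOf H).FiniteIndex}.Finite :=
  stmt_7_aux (Group.nilpotencyClass G) G le_rfl V
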